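/- Let D = (C_1,…,C_r) be a lexicographic northwest diagram, let 1 ≤ a < b ≤ r, and suppose C_a ∩ C_b is not equal to any column of D. Then the diagram obtained by inserting C_a ∩ C_b into the list of columns at its lexicographic position (i.e., the list consisting of C_1,…,C_r together with C_a ∩ C_b, arranged in lexicographic order) is again a lexicographic northwest diagram. -/

import Mathlib

/-- A diagram, given as a list of columns `C : Fin r → Finset ℕ`, is *northwest* if
for all `j ≤ j'`, `i ∈ C j` and `i' ∈ C j'` imply `min i i' ∈ C j`. -/
def IsNorthwest {r : ℕ} (C : Fin r → Finset ℕ) : Prop :=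
  ∀ j j' : Fin r, j ≤ j' → ∀ i ∈ C j, ∀ i' ∈ C j', min i i' ∈ C j

/-- `A` is an *initial subset* of `B` : `A ⊊ B` and every element of `B \ A` is greater
than every element of `A`. -/
def InitSub (A B : Finset ℕ) : Prop :=
  A ⊂ B ∧ ∀ x ∈ B \ A, ∀ y ∈ A, y < x

/-- Lexicographic comparison of finite subsets of `ℕ`, comparing the increasing lists of
elements: `A <lex B` iff the sorted list of `A` is smaller than that of `B` in the
(strict) lexicographic order on lists (in particular a proper initial segment is
smaller). -/
def LexLT (A B : Finset ℕ) : Prop :=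
  List.Lex (· < ·) (A.sort (· ≤ ·)) (B.sort (· ≤ ·))

/-- A list of columns is *lexicographic* if it is strictly increasing in `LexLT`
(in particular the columns are pairwise distinct). -/
def IsLex {r : ℕ} (C : Fin r → Finset ℕ) : Prop :=
  ∀ a b : Fin r, a < b → LexLT (C a) (C b)

lemma lexlt_trans {A B C : Finset ℕ} (h1 : LexLT A B) (h2 : LexLT B C) : LexLT A C :=
  lt_trans (α := List ℕ) h1 h2

lemma lexlt_asymm {A B : Finset ℕ} (h1 : LexLT A B) (h2 : LexLT B A) : False :=
  lt_asymm (α := List ℕ) h1 h2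

lemma sort_inj {A B : Finset ℕ} (h : A.sort (· ≤ ·) = B.sort (· ≤ ·)) : A = B := by
  ext x; rw [← Finset.mem_sort (· ≤ ·), h, Finset.mem_sort]

lemma lexlt_tri {A B : Finset ℕ} (h : A ≠ B) : LexLT A B ∨ LexLT B A := by
  rcases lt_trichotomy (A.sort (· ≤ ·)) (B.sort (· ≤ ·)) with h1 | h1 | h1
  · exact Or.inl h1
  · exact absurd (sort_inj h1) h
  · exact Or.inr h1

lemma sort_split (A : Finset ℕ) (c : ℕ) :
    A.sort (· ≤ ·) = (A.filter (· < c)).sort (· ≤ ·) ++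
      (A.filter (fun x => ¬ x < c)).sort (· ≤ ·) := by
  refine (fun hp hs₁ hs₂ => List.Perm.eq_of_pairwise' (r := (· ≤ ·)) hs₁ hs₂ hp) ?_ ?_ ?_
  · rw [← Multiset.coe_eq_coe]
    show (A.sort (· ≤ ·) : Multiset ℕ) =
      ((A.filter (· < c)).sort (· ≤ ·) : List ℕ) + ((A.filter (fun x => ¬ x < c)).sort (· ≤ ·) : List ℕ)
    rw [Finset.sort_eq, Finset.sort_eq, Finset.sort_eq, Finset.filter_val, Finset.filter_val,
      Multiset.filter_add_not]
  · exact Finset.pairwise_sort _ _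
  · rw [List.pairwise_append]
    refine ⟨Finset.pairwise_sort _ _, Finset.pairwise_sort _ _, ?_⟩
    intro x hx y hy
    rw [Finset.mem_sort] at hx hy
    simp only [Finset.mem_filter] at hx hy
    omega

lemma head_le_of_mem_sorted {x y : ℕ} {t : List ℕ}
    (hs : List.Pairwise (· ≤ ·) (x :: t)) (hy : y ∈ x :: t) : x ≤ y := by
  rcases List.mem_cons.mp hy with rfl | hy
  · exact le_refl _
  · exact (List.pairwise_cons.mp hs).1 y hy

lemma lex_cut₁ {A B : Finset ℕ} {c : ℕ} (hcB : c ∈ B) (hcA : c ∉ A)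
    (hagree : A.filter (· < c) = B.filter (· < c))
    (hx : ∃ x ∈ A, c < x) : LexLT B A := by
  unfold LexLT
  rw [sort_split A c, sort_split B c, ← hagree]
  apply List.Lex.append_left
  obtain ⟨x, hxA, hcx⟩ := hx
  have hc' : c ∈ (B.filter (fun x => ¬ x < c)).sort (· ≤ ·) := by
    rw [Finset.mem_sort, Finset.mem_filter]; exact ⟨hcB, by omega⟩
  have hx' : x ∈ (A.filter (fun x => ¬ x < c)).sort (· ≤ ·) := by
    rw [Finset.mem_sort, Finset.mem_filter]; exact ⟨hxA, by omega⟩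
  rcases hB : (B.filter (fun x => ¬ x < c)).sort (· ≤ ·) with _ | ⟨b0, tB⟩
  · rw [hB] at hc'; exact absurd hc' List.not_mem_nil
  rcases hA : (A.filter (fun x => ¬ x < c)).sort (· ≤ ·) with _ | ⟨a0, tA⟩
  · rw [hA] at hx'; exact absurd hx' List.not_mem_nil
  apply List.Lex.rel
  have h1 : b0 ≤ c := head_le_of_mem_sorted (hB ▸ Finset.pairwise_sort _ _) (hB ▸ hc')
  have h2 : a0 ∈ A ∧ ¬ a0 < c := by
    have : a0 ∈ (A.filter (fun x => ¬ x < c)).sort (· ≤ ·) := by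
      rw [hA]; exact List.mem_cons_self
    rw [Finset.mem_sort, Finset.mem_filter] at this; exact this
  have h3 : a0 ≠ c := fun h => hcA (h ▸ h2.1)
  omega

lemma lex_cut₂ {A B : Finset ℕ} {c : ℕ} (hcB : c ∈ B)
    (hagree : A.filter (· < c) = B.filter (· < c))
    (hall : ∀ x ∈ A, x < c) : LexLT A B := by
  unfold LexLT
  rw [sort_split B c, ← hagree]
  have hAf : A.filter (· < c) = A := by
    rw [Finset.filter_eq_self]; exact hall
  rw [hAf]
  nth_rewrite 1 [show A.sort (· ≤ ·) = A.sort (· ≤ ·) ++ [] from (List.append_nil _).symm]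
  apply List.Lex.append_left
  have hc' : c ∈ (B.filter (fun x => ¬ x < c)).sort (· ≤ ·) := by
    rw [Finset.mem_sort, Finset.mem_filter]; exact ⟨hcB, by omega⟩
  rcases hB : (B.filter (fun x => ¬ x < c)).sort (· ≤ ·) with _ | ⟨b0, tB⟩
  · rw [hB] at hc'; exact absurd hc' List.not_mem_nil
  exact List.Lex.nil

lemma lexlt_of_initsub {A B : Finset ℕ} (hsub : A ⊆ B) (hne : A ≠ B)
    (hgt : ∀ c ∈ B, c ∉ A → ∀ x ∈ A, x < c) : LexLT A B := by
  have hssub : A ⊂ B := lt_of_le_of_ne hsub hne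
  obtain ⟨c, hcB, hcA⟩ := Finset.exists_of_ssubset hssub
  have hne' : (B \ A).Nonempty := ⟨c, Finset.mem_sdiff.mpr ⟨hcB, hcA⟩⟩
  set c0 := (B \ A).min' hne' with hc0
  have hc0mem := (B \ A).min'_mem hne'
  rw [Finset.mem_sdiff] at hc0mem
  apply lex_cut₂ hc0mem.1
  · ext y
    simp only [Finset.mem_filter]
    constructor
    · rintro ⟨hyA, hyc⟩; exact ⟨hsub hyA, hyc⟩
    · rintro ⟨hyB, hyc⟩
      refine ⟨?_, hyc⟩
      by_contra hyA
      have := (B \ A).min'_le y (Finset.mem_sdiff.mpr ⟨hyB, hyA⟩)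
      omega
  · exact hgt c0 hc0mem.1 hc0mem.2

lemma lexlt_key {X V : Finset ℕ} (hXV : LexLT X V)
    (hclose : ∀ x ∈ X, ∀ c ∈ V, x < c → x ∈ V)
    {i' : ℕ} (hi'V : i' ∈ V) {i : ℕ} (hi : i ∈ X) (hlt : i' < i) : i' ∈ X := by
  by_contra hi'X
  classical
  set S := V.filter (fun cc => cc ∉ X ∧ ∃ x ∈ X, cc < x) with hSdef
  have hS : i' ∈ S := by
    rw [hSdef, Finset.mem_filter]; exact ⟨hi'V, hi'X, i, hi, hlt⟩
  have hSne : S.Nonempty := ⟨i', hS⟩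
  have hcmem := S.min'_mem hSne
  set c0 := S.min' hSne with hc0def
  rw [hSdef, Finset.mem_filter] at hcmem
  obtain ⟨hcV, hcX, x, hxX, hcx⟩ := hcmem
  have hagree : X.filter (· < c0) = V.filter (· < c0) := by
    ext y
    simp only [Finset.mem_filter]
    constructor
    · rintro ⟨hyX, hyc⟩; exact ⟨hclose y hyX c0 hcV hyc, hyc⟩
    · rintro ⟨hyV, hyc⟩
      refine ⟨?_, hyc⟩
      by_contra hyX
      have : y ∈ S := by
        rw [hSdef, Finset.mem_filter]
        exact ⟨hyV, hyX, x, hxX, by omega⟩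
      have := S.min'_le y this
      omega
  exact lexlt_asymm hXV (lex_cut₁ hcV hcX hagree ⟨x, hxX, hcx⟩)

/-- Inserting the intersection `C a ∩ C b` of two columns of a lexicographic northwest
diagram (when it is not already a column) at its lexicographic position yields again a
lexicographic northwest diagram. -/
theorem blowup_lex_northwest (r : ℕ) (C : Fin r → Finset ℕ)
    (hNW : IsNorthwest C) (hlex : IsLex C) (a b : Fin r) (hab : a < b)
    (hnew : ∀ j, C a ∩ C b ≠ C j) :
    ∃ E : Fin (r + 1) → Finset ℕ,
      (Finset.univ.val.map E = (C a ∩ C b) ::ₘ Finset.univ.val.map C) ∧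
      IsLex E ∧ IsNorthwest E := by
  classical
  set X := C a ∩ C b with hX
  have htri : ∀ j, LexLT (C j) X ∨ LexLT X (C j) := fun j => (lexlt_tri (hnew j)).symm
  have hXb : LexLT X (C b) := by
    apply lexlt_of_initsub Finset.inter_subset_right (hnew b)
    intro c hcB hcX x hx
    have hxa : x ∈ C a := (Finset.mem_inter.mp hx).1
    have hcA : c ∉ C a := fun h => hcX (Finset.mem_inter.mpr ⟨h, hcB⟩)
    by_contra hle
    push_neg at hle
    have hmin := hNW a b (le_of_lt hab) x hxa c hcB
    rw [min_eq_right hle] at hmin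
    exact hcA hmin
  have hub_of : ∀ {u : Fin r}, LexLT (C u) X → u < b := by
    intro u h
    by_contra hbu
    push_neg at hbu
    have hbX : LexLT (C b) X := by
      rcases eq_or_lt_of_le hbu with he | hl
      · rwa [he]
      · exact lexlt_trans (hlex b u hl) h
    exact lexlt_asymm hXb hbX
  set S : Finset (Fin r) := Finset.univ.filter (fun j => LexLT (C j) X) with hSdef
  set k := S.card with hkdef
  have hkr : k ≤ r := by
    have := Finset.card_filter_le Finset.univ (fun j => LexLT (C j) X)
    simpa using this
  have hdc : ∀ {u w : Fin r}, w ∈ S → u < w → u ∈ S := by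
    intro u w hw huw
    rw [hSdef, Finset.mem_filter] at hw ⊢
    exact ⟨Finset.mem_univ u, lexlt_trans (hlex u w huw) hw.2⟩
  have hmem : ∀ u : Fin r, u ∈ S ↔ (u : ℕ) < k := by
    intro u
    constructor
    · intro hu
      have hsub : Finset.Iic u ⊆ S := by
        intro w hw
        rcases eq_or_lt_of_le (Finset.mem_Iic.mp hw) with he | hl
        · rwa [he]
        · exact hdc hu hl
      have := Finset.card_le_card hsub
      rw [Fin.card_Iic] at this
      omega
    · intro hu
      by_contra hns
      have hsub : S ⊆ Finset.Iio u := by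
        intro w hw
        rw [Finset.mem_Iio]
        by_contra hge
        push_neg at hge
        rcases eq_or_lt_of_le hge with he | hl
        · exact hns (he ▸ hw)
        · exact hns (hdc hw hl)
      have := Finset.card_le_card hsub
      rw [Fin.card_Iio] at this
      omega
  have hmemlex : ∀ u : Fin r, (u : ℕ) < k ↔ LexLT (C u) X := by
    intro u
    rw [← hmem u, hSdef, Finset.mem_filter]
    simp
  set p : Fin (r + 1) := ⟨k, Nat.lt_succ_of_le hkr⟩ with hp
  have hpval : (p : ℕ) = k := rfl
  refine ⟨p.insertNth X C, ?_, ?_, ?_⟩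
  · rw [Fin.univ_succAbove r p, Finset.cons_val, Multiset.map_cons,
      Fin.insertNth_apply_same, Finset.map_val, Multiset.map_map]
    congr 1
    apply Multiset.map_congr rfl
    intro x _
    simp [Function.comp, Fin.succAboveEmb, Fin.insertNth_apply_succAbove]
  · intro i j hij
    rcases eq_or_ne i p with rfl | hi
    · rcases eq_or_ne j p with rfl | hj
      · exact absurd hij (lt_irrefl _)
      · obtain ⟨v, rfl⟩ := Fin.exists_succAbove_eq hj
        rw [Fin.insertNth_apply_same, Fin.insertNth_apply_succAbove]
        have hv : ¬ (v : ℕ) < k := by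
          have := (Fin.lt_succAbove_iff_le_castSucc p v).mp hij
          rw [Fin.le_def] at this
          simpa [hpval] using this
        rcases htri v with h | h
        · exact absurd ((hmemlex v).mpr h) hv
        · exact h
    · obtain ⟨u, rfl⟩ := Fin.exists_succAbove_eq hi
      rcases eq_or_ne j p with rfl | hj
      · rw [Fin.insertNth_apply_same, Fin.insertNth_apply_succAbove]
        have hu : (u : ℕ) < k := by
          have := (Fin.succAbove_lt_iff_castSucc_lt p u).mp hij
          rw [Fin.lt_def] at this
          simpa [hpval] using this
        exact (hmemlex u).mp hu
      · obtain ⟨v, rfl⟩ := Fin.exists_succAbove_eq hj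
        rw [Fin.insertNth_apply_succAbove, Fin.insertNth_apply_succAbove]
        exact hlex u v (Fin.succAbove_lt_succAbove_iff.mp hij)
  · intro j j' hjj' i hi i' hi'
    rcases eq_or_ne j p with rfl | hj
    · rcases eq_or_ne j' p with rfl | hj'
      · rw [Fin.insertNth_apply_same] at hi hi' ⊢
        rcases le_total i i' with h | h
        · rwa [min_eq_left h]
        · rwa [min_eq_right h]
      · obtain ⟨v, rfl⟩ := Fin.exists_succAbove_eq hj'
        rw [Fin.insertNth_apply_same] at hi ⊢
        rw [Fin.insertNth_apply_succAbove] at hi'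
        rcases le_total i i' with h | h
        · rwa [min_eq_left h]
        rw [min_eq_right h]
        rcases eq_or_lt_of_le h with rfl | hlt
        · exact hi
        have hpv : LexLT X (C v) := by
          have hplt : p < p.succAbove v := lt_of_le_of_ne hjj' (Fin.succAbove_ne p v).symm
          have hv : ¬ (v : ℕ) < k := by
            have := (Fin.lt_succAbove_iff_le_castSucc p v).mp hplt
            rw [Fin.le_def] at this
            simpa [hpval] using this
          rcases htri v with h' | h'
          · exact absurd ((hmemlex v).mpr h') hv
          · exact h'
        by_cases hbv : b ≤ v
        · have hav : a ≤ v := le_of_lt (lt_of_lt_of_le hab hbv)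
          have h1 : i' ∈ C a := by
            have := hNW a v hav i (Finset.mem_inter.mp hi).1 i' hi'
            rwa [min_eq_right (le_of_lt hlt)] at this
          have h2 : i' ∈ C b := by
            have := hNW b v hbv i (Finset.mem_inter.mp hi).2 i' hi'
            rwa [min_eq_right (le_of_lt hlt)] at this
          exact Finset.mem_inter.mpr ⟨h1, h2⟩
        · push_neg at hbv
          apply lexlt_key hpv ?_ hi' hi hlt
          intro x hx c hc hxc
          have := hNW v b (le_of_lt hbv) c hc x (Finset.mem_inter.mp hx).2
          rwa [min_eq_right (le_of_lt hxc)] at this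
    · obtain ⟨u, rfl⟩ := Fin.exists_succAbove_eq hj
      rcases eq_or_ne j' p with rfl | hj'
      · rw [Fin.insertNth_apply_succAbove] at hi ⊢
        rw [Fin.insertNth_apply_same] at hi'
        have hu : LexLT (C u) X := by
          have hplt : p.succAbove u < p := lt_of_le_of_ne hjj' (Fin.succAbove_ne p u)
          have h2 : (u : ℕ) < k := by
            have := (Fin.succAbove_lt_iff_castSucc_lt p u).mp hplt
            rw [Fin.lt_def] at this
            simpa [hpval] using this
          exact (hmemlex u).mp h2
        exact hNW u b (le_of_lt (hub_of hu)) i hi i' (Finset.mem_inter.mp hi').2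
      · obtain ⟨v, rfl⟩ := Fin.exists_succAbove_eq hj'
        rw [Fin.insertNth_apply_succAbove] at hi hi' ⊢
        exact hNW u v (Fin.succAbove_le_succAbove_iff.mp hjj') i hi i' hi'
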